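/- Let K be a field of characteristic p > 0 and O a valuation subring of K with maximal ideal M. Let G be an additive subgroup of K containing the Artin–Schreier group K^(p) = {x^p − x : x ∈ K}. Then O is compatible with G (i.e., M ⊆ G) if and only if O is weakly compatible with G (i.e., there is an ideal A of O with radical √A = M and A ⊆ G). -/

import Mathlib

theorem compatible_iff_weakly_compatible_of_artinSchreier_subset
    {K : Type*} [Field K] (p : ℕ) [CharP K p] (hp : 0 < p)
    (O : ValuationSubring K) (G : AddSubgroup K)
    (hAS : ∀ x : K, x ^ p - x ∈ G) :
    (∀ m : O, m ∈ IsLocalRing.maximalIdeal O → (m : K) ∈ G) ↔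
      ∃ A : Ideal O, A.radical = IsLocalRing.maximalIdeal O ∧ ∀ a ∈ A, (a : K) ∈ G := by
  constructor
  · intro h
    exact ⟨IsLocalRing.maximalIdeal O,
      (IsLocalRing.maximalIdeal.isMaximal O).isPrime.radical, h⟩
  · rintro ⟨A, hrad, hA⟩ m hm
    have : NeZero p := ⟨hp.ne'⟩
    have hp2 : 1 < p := (CharP.char_is_prime_of_pos K p).out.one_lt
    have key : ∀ (x : K) (k : ℕ), x ^ (p ^ k) - x ∈ G := by
      intro x k
      induction k with
      | zero => simpa using G.zero_mem
      | succ k ih =>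
        have h1 := hAS (x ^ (p ^ k))
        have heq : x ^ p ^ (k + 1) - x
            = ((x ^ p ^ k) ^ p - x ^ p ^ k) + (x ^ p ^ k - x) := by
          rw [← pow_mul, ← pow_succ]; ring
        rw [heq]
        exact G.add_mem h1 ih
    rw [← hrad] at hm
    obtain ⟨n, hn⟩ := hm
    have hle : n ≤ p ^ n := le_of_lt (Nat.lt_pow_self hp2 : n < p ^ n)
    have hmem : m ^ (p ^ n) ∈ A := by
      have : m ^ (p ^ n) = m ^ n * m ^ (p ^ n - n) := by
        rw [← pow_add, Nat.add_sub_cancel' hle]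
      rw [this]
      exact A.mul_mem_right _ hn
    have h1 : ((m : K)) ^ (p ^ n) ∈ G := by
      simpa using hA _ hmem
    have h2 := key (m : K) n
    have heq : (m : K) = -((m : K) ^ (p ^ n) - (m : K)) + (m : K) ^ (p ^ n) := by ring
    rw [heq]
    exact G.add_mem (G.neg_mem h2) h1
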